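/- Affine equivariance of generalized extremiles: let a > 0 and b ∈ ℝ, and suppose ℓ is shift invariant (ℓ(x+u, c+u) = ℓ(x,c) for all u) and positive homogeneous of degree k > 0 (ℓ(ax, ac) = a^k ℓ(x,c) for a > 0). If e(X; D, ℓ) is finite and E[d(F_X(X))(ℓ(aX, 0) − ℓ(aX + b, 0))] is finite, then e(aX + b; D, ℓ) = a · e(X; D, ℓ) + b. -/

import Mathlib

open MeasureTheory Set

/-- affine equivariance: let `a > 0`, `b ∈ ℝ`, `ℓ` shift invariant and
positive homogeneous of degree `k > 0`. If `c₀ = e(X; D, ℓ)` is a (finite) minimizer of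
the generalized-extremile objective of `X` and
`E[d(F_X(X))(ℓ(aX,0) − ℓ(aX+b,0))]` is finite, then `a·c₀ + b` minimizes the objective
of `aX + b` (written via `F_{aX+b}(aX+b) = F_X(X)` a.s.), i.e.
`e(aX+b; D, ℓ) = a · e(X; D, ℓ) + b`. -/
theorem stmt7 (μ : Measure ℝ) [IsProbabilityMeasure μ]
    (F d : ℝ → ℝ) (ℓ : ℝ → ℝ → ℝ) (a b k c₀ : ℝ)
    (ha : 0 < a) (hk : 0 < k)
    (hF : ∀ x, F x = (μ (Iic x)).toReal)
    (hshift : ∀ x c u : ℝ, ℓ (x + u) (c + u) = ℓ x c)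
    (hhom : ∀ t : ℝ, 0 < t → ∀ x c : ℝ, ℓ (t * x) (t * c) = t ^ k * ℓ x c)
    (hobj : ∀ c, Integrable (fun x => d (F x) * (ℓ x c - ℓ x 0)) μ)
    (hmin : IsMinOn (fun c => ∫ x, d (F x) * (ℓ x c - ℓ x 0) ∂μ) Set.univ c₀)
    (hfin : Integrable (fun x => d (F x) * (ℓ (a * x) 0 - ℓ (a * x + b) 0)) μ) :
    IsMinOn (fun c => ∫ x, d (F x) * (ℓ (a * x + b) c - ℓ (a * x + b) 0) ∂μ)
      Set.univ (a * c₀ + b) := by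
  have hpow : (0:ℝ) < a ^ k := Real.rpow_pos_of_pos ha k
  have key : ∀ c : ℝ, (fun x => d (F x) * (ℓ (a * x + b) c - ℓ (a * x + b) 0))
      = fun x => a ^ k * (d (F x) * (ℓ x ((c - b) / a) - ℓ x 0))
        + d (F x) * (ℓ (a * x) 0 - ℓ (a * x + b) 0) := by
    intro c; funext x
    have h1 : ℓ (a * x + b) c = a ^ k * ℓ x ((c - b) / a) := by
      have hs := hshift (a * x) (c - b) b
      rw [sub_add_cancel] at hs
      have hh := hhom a ha x ((c - b) / a)
      rw [mul_div_cancel₀ _ ha.ne'] at hh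
      rw [hs, hh]
    have h2 : ℓ (a * x) 0 = a ^ k * ℓ x 0 := by
      have hh := hhom a ha x 0
      rw [mul_zero] at hh
      exact hh
    rw [h1]
    ring_nf
    rw [h2]
    ring
  have hg : ∀ c, (∫ x, d (F x) * (ℓ (a * x + b) c - ℓ (a * x + b) 0) ∂μ)
      = a ^ k * (∫ x, d (F x) * (ℓ x ((c - b) / a) - ℓ x 0) ∂μ)
        + ∫ x, d (F x) * (ℓ (a * x) 0 - ℓ (a * x + b) 0) ∂μ := by
    intro c
    rw [key c, integral_add ((hobj _).const_mul _) hfin, integral_const_mul]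
  intro c _
  simp only [mem_setOf_eq]
  rw [hg, hg]
  have hc₀ : (a * c₀ + b - b) / a = c₀ := by
    field_simp
    ring
  rw [hc₀]
  refine add_le_add_left (mul_le_mul_of_nonneg_left ?_ hpow.le) _
  exact hmin (mem_univ ((c - b) / a))
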